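/- Let V₁, …, V_l be subspaces of a finite-dimensional complex inner product space E satisfying the non-intersection conditions V_{j+1} ∩ V_j⊥ = {0} for all j = 1, …, l−1. Then the kernel of the composition T_{V_l}(0) ∘ ⋯ ∘ T_{V_1}(0) = Π_{V_l⊥} ∘ ⋯ ∘ Π_{V_1⊥} equals V₁. -/

import Mathlib

noncomputable def projL {E : Type*} [NormedAddCommGroup E] [InnerProductSpace ℂ E]
    [FiniteDimensional ℂ E] (V : Submodule ℂ E) : E →ₗ[ℂ] E :=
  V.subtype ∘ₗ V.orthogonalProjectionOnto.toLinearMap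

noncomputable def TV {E : Type*} [NormedAddCommGroup E] [InnerProductSpace ℂ E]
    [FiniteDimensional ℂ E] (V : Submodule ℂ E) (z : ℂ) : E →ₗ[ℂ] E :=
  z • projL V + projL Vᗮ

variable {E : Type*} [NormedAddCommGroup E] [InnerProductSpace ℂ E] [FiniteDimensional ℂ E]

lemma TV_zero (V : Submodule ℂ E) : TV V 0 = projL Vᗮ := by
  simp [TV]

lemma ker_projL (V : Submodule ℂ E) : LinearMap.ker (projL Vᗮ) = V := by
  ext x
  simp only [projL, LinearMap.mem_ker, LinearMap.comp_apply,
    ContinuousLinearMap.coe_coe, Submodule.coe_subtype, Submodule.coe_eq_zero]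
  rw [Submodule.orthogonalProjectionOnto_eq_zero_iff, Submodule.orthogonal_orthogonal]

lemma range_projL (V : Submodule ℂ E) : LinearMap.range (projL V) ≤ V := by
  rintro x ⟨y, rfl⟩
  simp [projL]

lemma range_prod_le (m : ℕ) (W : Fin (m + 1) → Submodule ℂ E) :
    LinearMap.range
      ((List.ofFn fun j : Fin (m + 1) => (TV (W j) 0 : Module.End ℂ E)).reverse.prod
        : E →ₗ[ℂ] E) ≤ (W (Fin.last m))ᗮ := by
  rw [List.ofFn_succ', List.concat_eq_append, List.reverse_append, List.reverse_singleton,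
    List.singleton_append, List.prod_cons]
  refine le_trans ?_ (range_projL (W (Fin.last m))ᗮ)
  rw [TV_zero, Module.End.mul_eq_comp]
  exact LinearMap.range_comp_le_range _ _

/-- The composition T_{V_l}(0) ∘ ⋯ ∘ T_{V_1}(0): the list [T_{V_l},…,T_{V_1}] multiplied
as endomorphisms (product = composition). -/
theorem ker_comp_proj (l : ℕ) (V : Fin (l + 1) → Submodule ℂ E)
    (hV : ∀ j : Fin l, V j.succ ⊓ (V j.castSucc)ᗮ = ⊥) :
    LinearMap.ker
      ((List.ofFn fun j : Fin (l + 1) => (TV (V j) 0 : Module.End ℂ E)).reverse.prod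
        : E →ₗ[ℂ] E) = V 0 := by
  induction l with
  | zero =>
    simp only [List.ofFn_succ, List.ofFn_zero, List.reverse_cons, List.reverse_nil,
      List.nil_append, List.prod_cons, List.prod_nil, mul_one]
    rw [TV_zero, ker_projL]
  | succ n ih =>
    rw [List.ofFn_succ', List.concat_eq_append, List.reverse_append, List.reverse_singleton,
      List.singleton_append, List.prod_cons]
    set P := ((List.ofFn fun j : Fin (n + 1) =>
      (TV (V j.castSucc) 0 : Module.End ℂ E)).reverse.prod : E →ₗ[ℂ] E) with hP
    have hkerP : LinearMap.ker P = V 0 := by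
      rw [hP]
      exact ih (fun j => V j.castSucc) (fun j => by
        simpa only [Fin.succ_castSucc] using hV j.castSucc)
    have hrangeP : LinearMap.range P ≤ (V ((Fin.last n).castSucc))ᗮ :=
      range_prod_le n (fun j => V j.castSucc)
    ext x
    simp only [LinearMap.mem_ker, Module.End.mul_apply]
    constructor
    · intro hx
      have h1 : P x ∈ LinearMap.ker (TV (V (Fin.last (n + 1))) 0) := hx
      rw [TV_zero, ker_projL] at h1
      have h2 : P x ∈ V (Fin.last n).succ ⊓ (V ((Fin.last n).castSucc))ᗮ := by
        constructor
        · rwa [Fin.succ_last]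
        · exact hrangeP ⟨x, rfl⟩
      rw [hV (Fin.last n)] at h2
      have : x ∈ LinearMap.ker P := h2
      rwa [hkerP] at this
    · intro hx
      have : x ∈ LinearMap.ker P := by rwa [hkerP]
      rw [LinearMap.mem_ker] at this
      rw [this, map_zero]
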